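/- Let B_O be the coordinate ring of the O-border basis scheme and U_O = B_O[x_1,…,x_n]/(g_1,…,g_ν) the universal border basis family, where g_j = b_j − Σ_i c_{ij} t_i is the generic O-border prebasis. Then the residue classes of t_1,…,t_μ form a free B_O-module basis of U_O; in particular, U_O is a flat B_O-algebra. -/

import Mathlib

open MvPolynomial Finsupp

open scoped Classical

set_option synthInstance.maxHeartbeats 1000000
set_option maxHeartbeats 1000000

/-- The border of a finite set of monomials (represented as exponent vectors). -/
noncomputable def borderSet (n : ℕ) (O : Finset (Fin n →₀ ℕ)) : Finset (Fin n →₀ ℕ) :=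
  (O.biUnion (fun t => Finset.image (fun k => t + Finsupp.single k 1) Finset.univ)) \ O

/-- The polynomial ring `K[c_{ij}]` in the generic coefficients, indexed by pairs `(t, b)` of an
order ideal term `t` and a border term `b`. -/
abbrev CoeffRing (K : Type*) [Field K] (n : ℕ) : Type _ :=
  MvPolynomial ((Fin n →₀ ℕ) × (Fin n →₀ ℕ)) K

/-- The `k`-th generic multiplication matrix of the generic `O`-border prebasis
`g_b = b - Σ_{t ∈ O} c_{t,b} t`. -/
noncomputable def Agen (K : Type*) [Field K] (n : ℕ) (O : Finset (Fin n →₀ ℕ)) (k : Fin n) :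
    Matrix ↥O ↥O (CoeffRing K n) :=
  Matrix.of fun r i =>
    if ((i : Fin n →₀ ℕ) + Finsupp.single k 1) ∈ O then
      (if (r : Fin n →₀ ℕ) = (i : Fin n →₀ ℕ) + Finsupp.single k 1 then 1 else 0)
    else if ((i : Fin n →₀ ℕ) + Finsupp.single k 1) ∈ borderSet n O then
      X ((r : Fin n →₀ ℕ), (i : Fin n →₀ ℕ) + Finsupp.single k 1)
    else 0

/-- The vanishing ideal `I(𝔹_O)` of the `O`-border basis scheme: the ideal generated by the
entries of the commutators of the generic multiplication matrices. -/
noncomputable def bbsIdeal (K : Type*) [Field K] (n : ℕ) (O : Finset (Fin n →₀ ℕ)) :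
    Ideal (CoeffRing K n) :=
  Ideal.span {x | ∃ (k l : Fin n) (r i : ↥O),
    x = (Agen K n O k * Agen K n O l - Agen K n O l * Agen K n O k) r i}

/-- The coordinate ring `B_O = K[c_{ij}]/I(𝔹_O)` of the `O`-border basis scheme. -/
abbrev BOring (K : Type*) [Field K] (n : ℕ) (O : Finset (Fin n →₀ ℕ)) : Type _ :=
  CoeffRing K n ⧸ bbsIdeal K n O

/-- The ideal of `B_O[x_1,…,x_n]` generated by the generic `O`-border prebasis, defining the
universal `O`-border basis family `U_O = B_O[x_1,…,x_n]/(g_1,…,g_ν)`. -/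
noncomputable def univIdeal (K : Type*) [Field K] (n : ℕ) (O : Finset (Fin n →₀ ℕ)) :
    Ideal (MvPolynomial (Fin n) (BOring K n O)) :=
  Ideal.span {p | ∃ b ∈ borderSet n O, p = monomial b 1 -
    ∑ t ∈ O, MvPolynomial.C (Ideal.Quotient.mk (bbsIdeal K n O) (X (t, b))) * monomial t 1}

noncomputable section BBAux
open Matrix

variable (K : Type*) [Field K] (n : ℕ) (O : Finset (Fin n →₀ ℕ))

/-- The generic multiplication matrices, reduced modulo `I(𝔹_O)`. -/
def Abar (k : Fin n) : Matrix ↥O ↥O (BOring K n O) :=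
  (Ideal.Quotient.mk (bbsIdeal K n O)).mapMatrix (Agen K n O k)

lemma Abar_comm (k l : Fin n) : Abar K n O k * Abar K n O l = Abar K n O l * Abar K n O k := by
  have h : (Ideal.Quotient.mk (bbsIdeal K n O)).mapMatrix
      (Agen K n O k * Agen K n O l - Agen K n O l * Agen K n O k) = 0 := by
    ext r i
    simp only [RingHom.mapMatrix_apply, Matrix.map_apply, Matrix.zero_apply]
    exact Ideal.Quotient.eq_zero_iff_mem.mpr (Ideal.subset_span ⟨k, l, r, i, rfl⟩)
  rw [_root_.map_sub, _root_.map_mul, _root_.map_mul, sub_eq_zero] at h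
  exact h

/-- The (commutative) subalgebra generated by the reduced multiplication matrices. -/
def Sadj : Subalgebra (BOring K n O) (Matrix ↥O ↥O (BOring K n O)) :=
  Algebra.adjoin _ (Set.range fun k => Abar K n O k)

instance : CommRing (Sadj K n O) :=
  { (Sadj K n O).toRing with
    mul_comm := (Algebra.isMulCommutative_adjoin _ (by
      rintro a ⟨k, rfl⟩ b ⟨l, rfl⟩; exact Abar_comm K n O k l)).is_comm.comm }

/-- Evaluation of polynomials at the commuting matrices `Abar`. -/
def Phi : MvPolynomial (Fin n) (BOring K n O) →ₐ[BOring K n O]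
    Matrix ↥O ↥O (BOring K n O) :=
  (Sadj K n O).val.comp (aeval fun k =>
    (⟨Abar K n O k, Algebra.subset_adjoin ⟨k, rfl⟩⟩ : Sadj K n O))

lemma Phi_X (k : Fin n) : Phi K n O (X k) = Abar K n O k := by
  simp [Phi]

/-- The linear map `p ↦ p(Abar) e_{t₀}`. -/
def phiL (t0 : ↥O) : MvPolynomial (Fin n) (BOring K n O) →ₗ[BOring K n O]
    (↥O → BOring K n O) :=
  (LinearMap.applyₗ (Pi.single t0 1)).comp
    (Matrix.toLin'.toLinearMap.comp (Phi K n O).toLinearMap)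

lemma phiL_apply (t0 : ↥O) (p : MvPolynomial (Fin n) (BOring K n O)) :
    phiL K n O t0 p = (Phi K n O p) *ᵥ Pi.single t0 1 := rfl

lemma phiL_mul (t0 : ↥O) (p q : MvPolynomial (Fin n) (BOring K n O)) :
    phiL K n O t0 (p * q) = Phi K n O p *ᵥ phiL K n O t0 q := by
  rw [phiL_apply, phiL_apply, _root_.map_mul, ← Matrix.mulVec_mulVec]

lemma Abar_single (k : Fin n) (i j : ↥O)
    (hj : (j : Fin n →₀ ℕ) = (i : Fin n →₀ ℕ) + Finsupp.single k 1) :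
    Abar K n O k *ᵥ Pi.single i (1 : BOring K n O) = Pi.single j 1 := by
  funext r
  have hmem : (i : Fin n →₀ ℕ) + Finsupp.single k 1 ∈ O := hj ▸ j.2
  simp only [Matrix.mulVec_single_one, Matrix.col_apply, mul_one, Abar, RingHom.mapMatrix_apply, Matrix.map_apply,
    Agen, Matrix.of_apply, if_pos hmem, Pi.single_apply]
  by_cases h : (r : Fin n →₀ ℕ) = (i : Fin n →₀ ℕ) + Finsupp.single k 1
  · rw [if_pos h, _root_.map_one, if_pos (Subtype.ext (h.trans hj.symm))]
  · rw [if_neg h, _root_.map_zero, if_neg fun hr => h (by rw [hr, hj])]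

lemma Abar_single_border (k : Fin n) (i : ↥O)
    (hb : (i : Fin n →₀ ℕ) + Finsupp.single k 1 ∈ borderSet n O) :
    Abar K n O k *ᵥ Pi.single i (1 : BOring K n O) =
      fun r : ↥O => Ideal.Quotient.mk (bbsIdeal K n O)
        (X ((r : Fin n →₀ ℕ), (i : Fin n →₀ ℕ) + Finsupp.single k 1)) := by
  funext r
  have hnot : (i : Fin n →₀ ℕ) + Finsupp.single k 1 ∉ O := (Finset.mem_sdiff.mp hb).2
  simp only [Matrix.mulVec_single_one, Matrix.col_apply, mul_one, Abar, RingHom.mapMatrix_apply, Matrix.map_apply,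
    Agen, Matrix.of_apply, if_neg hnot, if_pos hb]

lemma monomial_split (k : Fin n) (t : Fin n →₀ ℕ) :
    (monomial (t + Finsupp.single k 1) (1 : BOring K n O)) = X k * monomial t 1 := by
  rw [X, monomial_mul, one_mul, add_comm]

lemma phiL_monomial (h0 : (0 : Fin n →₀ ℕ) ∈ O)
    (hO : ∀ t ∈ O, ∀ s : Fin n →₀ ℕ, s ≤ t → s ∈ O) :
    ∀ d (t : Fin n →₀ ℕ) (ht : t ∈ O), t.sum (fun _ e => e) = d →
      phiL K n O ⟨0, h0⟩ (monomial t 1) = Pi.single (⟨t, ht⟩ : ↥O) 1 := by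
  intro d
  induction d using Nat.strong_induction_on with
  | _ d ih =>
    intro t ht hd
    by_cases h : t = 0
    · subst h
      rw [phiL_apply, monomial_zero', MvPolynomial.C_1, _root_.map_one, Matrix.one_mulVec]
    · obtain ⟨k, hk⟩ : ∃ k, t k ≠ 0 := by
        by_contra hc; push_neg at hc; exact h (Finsupp.ext fun k => hc k)
      have hle : Finsupp.single k 1 ≤ t := Finsupp.single_le_iff.mpr (Nat.one_le_iff_ne_zero.mpr hk)
      obtain ⟨t', htt⟩ : ∃ t', t' + Finsupp.single k 1 = t :=
        ⟨t - Finsupp.single k 1, tsub_add_cancel_of_le hle⟩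
      subst htt
      have ht'mem : t' ∈ O := hO _ ht t' le_self_add
      have hsum : t'.sum (fun _ e => e) + 1 = d := by
        rw [← hd, Finsupp.sum_add_index' (fun _ => rfl) (fun _ _ _ => rfl),
          Finsupp.sum_single_index rfl]
      have hlt : t'.sum (fun _ e => e) < d := by omega
      rw [monomial_split, phiL_mul, Phi_X,
        ih _ hlt t' ht'mem rfl, Abar_single K n O k ⟨t', ht'mem⟩ ⟨_, ht⟩ rfl]

lemma border_exists {n : ℕ} {O : Finset (Fin n →₀ ℕ)} {b : Fin n →₀ ℕ}
    (hb : b ∈ borderSet n O) :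
    ∃ i ∈ O, ∃ k : Fin n, b = i + Finsupp.single k 1 := by
  have h := (Finset.mem_sdiff.mp hb).1
  simp only [Finset.mem_biUnion, Finset.mem_image, Finset.mem_univ, true_and] at h
  obtain ⟨t, ht, k, hk⟩ := h
  exact ⟨t, ht, k, hk.symm⟩

lemma phiL_gen (h0 : (0 : Fin n →₀ ℕ) ∈ O)
    (hO : ∀ t ∈ O, ∀ s : Fin n →₀ ℕ, s ≤ t → s ∈ O)
    {b : Fin n →₀ ℕ} (hb : b ∈ borderSet n O) :
    phiL K n O ⟨0, h0⟩ (monomial b 1 -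
      ∑ t ∈ O, MvPolynomial.C (Ideal.Quotient.mk (bbsIdeal K n O) (X (t, b))) * monomial t 1)
      = 0 := by
  rw [_root_.map_sub, sub_eq_zero]
  obtain ⟨i, hiO, k, hbk⟩ := border_exists hb
  have h1 : phiL K n O ⟨0, h0⟩ (monomial b 1) =
      fun r : ↥O => Ideal.Quotient.mk (bbsIdeal K n O) (X ((r : Fin n →₀ ℕ), b)) := by
    subst hbk
    rw [monomial_split, phiL_mul, Phi_X, phiL_monomial K n O h0 hO _ i hiO rfl,
      Abar_single_border K n O k ⟨i, hiO⟩ hb]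
  have h2 : phiL K n O ⟨0, h0⟩
      (∑ t ∈ O, MvPolynomial.C (Ideal.Quotient.mk (bbsIdeal K n O) (X (t, b))) * monomial t 1) =
      fun r : ↥O => Ideal.Quotient.mk (bbsIdeal K n O) (X ((r : Fin n →₀ ℕ), b)) := by
    rw [← Finset.sum_attach O
      (fun t => MvPolynomial.C (Ideal.Quotient.mk (bbsIdeal K n O) (X (t, b))) * monomial t 1),
      _root_.map_sum]
    have : ∀ t : ↥O, phiL K n O ⟨0, h0⟩
        (MvPolynomial.C (Ideal.Quotient.mk (bbsIdeal K n O) (X ((t : Fin n →₀ ℕ), b))) *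
          monomial (t : Fin n →₀ ℕ) 1) =
        Ideal.Quotient.mk (bbsIdeal K n O) (X ((t : Fin n →₀ ℕ), b)) • (Pi.single t 1 : ↥O → BOring K n O) := by
      intro t
      rw [MvPolynomial.C_mul', _root_.map_smul, phiL_monomial K n O h0 hO _ _ t.2 rfl]
    rw [Finset.sum_congr rfl fun t _ => this t]
    funext r
    simp only [Finset.sum_apply, Pi.smul_apply, Pi.single_apply, smul_eq_mul, mul_ite, mul_one,
      mul_zero]
    rw [Finset.sum_ite_eq O.attach r
      (fun t => Ideal.Quotient.mk (bbsIdeal K n O) (X ((t : Fin n →₀ ℕ), b)))]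
    simp
  rw [h1, h2]


lemma phiL_univIdeal (h0 : (0 : Fin n →₀ ℕ) ∈ O)
    (hO : ∀ t ∈ O, ∀ s : Fin n →₀ ℕ, s ≤ t → s ∈ O) :
    ∀ p ∈ univIdeal K n O, phiL K n O ⟨0, h0⟩ p = 0 := by
  intro p hp
  refine Submodule.span_induction ?_ ?_ ?_ ?_ hp
  · rintro x ⟨b, hb, rfl⟩
    exact phiL_gen K n O h0 hO hb
  · exact _root_.map_zero _
  · intro x y _ _ hx hy
    rw [_root_.map_add, hx, hy, add_zero]
  · intro a x _ hx
    rw [smul_eq_mul, phiL_mul, hx, Matrix.mulVec_zero]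

lemma mk_smul_univ (c : BOring K n O) (p : MvPolynomial (Fin n) (BOring K n O)) :
    Ideal.Quotient.mk (univIdeal K n O) (c • p)
      = c • Ideal.Quotient.mk (univIdeal K n O) p :=
  Submodule.Quotient.mk_smul _ c p



def fO (t : ↥O) :=
  Ideal.Quotient.mk (univIdeal K n O) (monomial (t : Fin n →₀ ℕ) (1 : BOring K n O))

lemma univ_li (h0 : (0 : Fin n →₀ ℕ) ∈ O)
    (hO : ∀ t ∈ O, ∀ s : Fin n →₀ ℕ, s ≤ t → s ∈ O) :
    LinearIndependent (BOring K n O) (fO K n O) := by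
  rw [Fintype.linearIndependent_iff]
  intro g hg s
  have hq : Ideal.Quotient.mk (univIdeal K n O)
      (∑ t : ↥O, g t • monomial (t : Fin n →₀ ℕ) (1 : BOring K n O)) = 0 := by
    rw [map_sum]
    simp_rw [mk_smul_univ]
    exact hg
  have hmem := Ideal.Quotient.eq_zero_iff_mem.mp hq
  have h0' := phiL_univIdeal K n O h0 hO _ hmem
  rw [map_sum] at h0'
  have hmono : ∀ t : ↥O, phiL K n O ⟨0, h0⟩ (g t • monomial (t : Fin n →₀ ℕ) 1)
      = g t • (Pi.single t 1 : ↥O → BOring K n O) := fun t => by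
    rw [_root_.map_smul, phiL_monomial K n O h0 hO _ _ t.2 rfl]
  rw [Finset.sum_congr rfl fun t _ => hmono t] at h0'
  have := congrFun h0' s
  simp only [Finset.sum_apply, Pi.smul_apply, Pi.single_apply, smul_eq_mul, mul_ite, mul_one,
    mul_zero, Pi.zero_apply, Finset.sum_ite_eq, Finset.mem_univ, if_true] at this
  exact this

lemma univ_Xmul (h0 : (0 : Fin n →₀ ℕ) ∈ O) (k : Fin n)
    (w : _)
    (hw : w ∈ Submodule.span (BOring K n O) (Set.range (fO K n O))) :
    Ideal.Quotient.mk (univIdeal K n O) (X k) * w ∈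
      Submodule.span (BOring K n O) (Set.range (fO K n O)) := by
  refine Submodule.span_induction ?_ ?_ ?_ ?_ hw
  · rintro x ⟨t, rfl⟩
    rw [fO]
    rw [← _root_.map_mul, ← monomial_split]
    by_cases hmem : ((t : Fin n →₀ ℕ) + Finsupp.single k 1) ∈ O
    · exact Submodule.subset_span ⟨⟨_, hmem⟩, rfl⟩
    · have hbord : ((t : Fin n →₀ ℕ) + Finsupp.single k 1) ∈ borderSet n O :=
        Finset.mem_sdiff.mpr ⟨Finset.mem_biUnion.mpr
          ⟨t, t.2, Finset.mem_image.mpr ⟨k, Finset.mem_univ k, rfl⟩⟩, hmem⟩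
      have hgen : (monomial ((t : Fin n →₀ ℕ) + Finsupp.single k 1) (1 : BOring K n O) -
          ∑ t' ∈ O, MvPolynomial.C (Ideal.Quotient.mk (bbsIdeal K n O)
            (X (t', (t : Fin n →₀ ℕ) + Finsupp.single k 1))) * monomial t' 1) ∈
          univIdeal K n O :=
        Ideal.subset_span ⟨_, hbord, rfl⟩
      have hrel : Ideal.Quotient.mk (univIdeal K n O)
          (monomial ((t : Fin n →₀ ℕ) + Finsupp.single k 1) (1 : BOring K n O)) =
          Ideal.Quotient.mk (univIdeal K n O)
            ((∑ t' ∈ O, MvPolynomial.C (Ideal.Quotient.mk (bbsIdeal K n O)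
              (X (t', (t : Fin n →₀ ℕ) + Finsupp.single k 1))) * monomial t' 1 :
                MvPolynomial (Fin n) (BOring K n O))) := by
        rw [Ideal.Quotient.eq]
        exact hgen
      rw [hrel, ← Finset.sum_attach O
        (fun t' => MvPolynomial.C (Ideal.Quotient.mk (bbsIdeal K n O)
          (X (t', (t : Fin n →₀ ℕ) + Finsupp.single k 1))) * monomial t' 1), map_sum]
      refine Submodule.sum_mem _ fun t' _ => ?_
      rw [MvPolynomial.C_mul', mk_smul_univ]
      exact Submodule.smul_mem _ _ (Submodule.subset_span ⟨t', rfl⟩)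
  · rw [mul_zero]; exact Submodule.zero_mem _
  · intro x y _ _ hx hy; rw [mul_add]; exact Submodule.add_mem _ hx hy
  · intro a x _ hx; rw [mul_smul_comm]; exact Submodule.smul_mem _ a hx

lemma univ_mono_mem (h0 : (0 : Fin n →₀ ℕ) ∈ O) (m : Fin n →₀ ℕ) :
    Ideal.Quotient.mk (univIdeal K n O) (monomial m (1 : BOring K n O)) ∈
      Submodule.span (BOring K n O) (Set.range (fO K n O)) := by
  have key : ∀ d (m : Fin n →₀ ℕ), m.sum (fun _ e => e) = d →
      Ideal.Quotient.mk (univIdeal K n O) (monomial m (1 : BOring K n O)) ∈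
        Submodule.span (BOring K n O) (Set.range (fO K n O)) := by
    intro d
    induction d using Nat.strong_induction_on with
    | _ d ih =>
      intro m hd
      by_cases hm : m = 0
      · subst hm
        exact Submodule.subset_span ⟨⟨0, h0⟩, rfl⟩
      · obtain ⟨k, hk⟩ : ∃ k, m k ≠ 0 := by
          by_contra hc; push_neg at hc; exact hm (Finsupp.ext fun k => hc k)
        have hle : Finsupp.single k 1 ≤ m :=
          Finsupp.single_le_iff.mpr (Nat.one_le_iff_ne_zero.mpr hk)
        obtain ⟨m', hmm⟩ : ∃ m', m' + Finsupp.single k 1 = m :=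
          ⟨m - Finsupp.single k 1, tsub_add_cancel_of_le hle⟩
        subst hmm
        have hsum : m'.sum (fun _ e => e) + 1 = d := by
          rw [← hd, Finsupp.sum_add_index' (fun _ => rfl) (fun _ _ _ => rfl),
            Finsupp.sum_single_index rfl]
        have hlt : m'.sum (fun _ e => e) < d := by omega
        rw [monomial_split, _root_.map_mul]
        exact univ_Xmul K n O h0 k _ (ih _ hlt m' rfl)
  exact key _ m rfl

lemma univ_span (h0 : (0 : Fin n →₀ ℕ) ∈ O) :
    Submodule.span (BOring K n O) (Set.range (fO K n O)) = ⊤ := by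
  rw [eq_top_iff]
  rintro u -
  obtain ⟨p, rfl⟩ := Ideal.Quotient.mk_surjective u
  rw [← MvPolynomial.support_sum_monomial_coeff p, map_sum]
  refine Submodule.sum_mem _ fun m _ => ?_
  have hcm : monomial m (coeff m p) = (coeff m p) • monomial m (1 : BOring K n O) := by
    rw [MvPolynomial.smul_monomial, smul_eq_mul, mul_one]
  rw [hcm, mk_smul_univ]
  exact Submodule.smul_mem _ _ (univ_mono_mem K n O h0 m)

end BBAux

/-- **The universal border basis family.** The residue classes of the order ideal terms form a
free `B_O`-module basis of `U_O`; in particular `U_O` is flat over `B_O`. -/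
theorem universal_borderBasis_family_free (K : Type*) [Field K] (n : ℕ)
    (O : Finset (Fin n →₀ ℕ)) (h0 : (0 : Fin n →₀ ℕ) ∈ O)
    (hO : ∀ t ∈ O, ∀ s : Fin n →₀ ℕ, s ≤ t → s ∈ O) :
    LinearIndependent (BOring K n O)
      (fun t : ↥O => Ideal.Quotient.mk (univIdeal K n O)
        (monomial (t : Fin n →₀ ℕ) (1 : BOring K n O))) ∧
    Submodule.span (BOring K n O)
      (Set.range (fun t : ↥O => Ideal.Quotient.mk (univIdeal K n O)
        (monomial (t : Fin n →₀ ℕ) (1 : BOring K n O)))) = ⊤ ∧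
    Module.Flat (BOring K n O)
      (@HasQuotient.Quotient (MvPolynomial (Fin n) (BOring K n O)) _
        (@Ideal.instHasQuotient _ inferInstance) (univIdeal K n O)) := by
  have hli := univ_li K n O h0 hO
  have hspan := univ_span K n O h0
  haveI : Module.Free (BOring K n O)
      (@HasQuotient.Quotient (MvPolynomial (Fin n) (BOring K n O)) _
        (@Ideal.instHasQuotient _ inferInstance) (univIdeal K n O)) :=
    Module.Free.of_basis (Module.Basis.mk hli (by rw [hspan]))
  exact ⟨hli, hspan, inferInstance⟩
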